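/- Let ψ be an admissible weight function and k a natural number. A distribution f on ℝ₊ belongs to H^{−k,ψ(x)}(ℝ₊) (i.e. admits a representation f = Σ_{j=0}^k f_j^{(j)} with f_j ψ^{1/2} ∈ L²(ℝ₊) for all j) if and only if the distribution f ψ^{1/2} belongs to H^{−k}(ℝ₊); moreover the corresponding norms are equivalent: there exists a constant c, depending on k and on the properties of ψ, such that c^{−1} ‖f ψ^{1/2}‖_{H^{−k}(ℝ₊)} ≤ ‖f‖_{H^{−k,ψ(x)}(ℝ₊)} ≤ c ‖f ψ^{1/2}‖_{H^{−k}(ℝ₊)}. -/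

import Mathlib

open MeasureTheory Set
open scoped ENNReal

noncomputable section

/-- An admissible weight function: infinitely smooth and positive on `[0,+∞)`,
every derivative is dominated by the function itself, and the function satisfies
the one-sided comparison condition on unit intervals. -/
def IsAdmissibleWeight (ψ : ℝ → ℝ) : Prop :=
  ContDiffOn ℝ (⊤ : ℕ∞) ψ (Ici 0) ∧ (∀ x : ℝ, 0 ≤ x → 0 < ψ x) ∧
  (∀ j : ℕ, ∃ c : ℝ, ∀ x : ℝ, 0 ≤ x → |iteratedDerivWithin j ψ (Ici 0) x| ≤ c * ψ x) ∧
  (∃ c : ℝ, 0 < c ∧ ∀ x₁ x₂ : ℝ, 0 ≤ x₁ → x₁ < x₂ → x₂ < x₁ + 1 → ψ x₁ ≤ c * ψ x₂)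

/-- `v` is the `n`-th weak (distributional) derivative of `u` on the open set `Ω ⊆ ℝ`. -/
def IsWeakDeriv1 (Ω : Set ℝ) (n : ℕ) (u v : ℝ → ℝ) : Prop :=
  ∀ ϑ : ℝ → ℝ, ContDiff ℝ (⊤ : ℕ∞) ϑ → HasCompactSupport ϑ → tsupport ϑ ⊆ Ω →
    ∫ x in Ω, u x * iteratedDeriv n ϑ x = (-1 : ℝ) ^ n * ∫ x in Ω, v x * ϑ x

/-- The `k`-th distributional derivative of `f` on `Ω` equals `Σ_{j=0}^m g_j^{(j)}`
(a representation in `H^{-m}(Ω)`). -/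
def HasNegRep (Ω : Set ℝ) (k m : ℕ) (f : ℝ → ℝ) (g : ℕ → ℝ → ℝ) : Prop :=
  ∀ ϑ : ℝ → ℝ, ContDiff ℝ (⊤ : ℕ∞) ϑ → HasCompactSupport ϑ → tsupport ϑ ⊆ Ω →
    (-1 : ℝ) ^ k * ∫ x in Ω, f x * iteratedDeriv k ϑ x =
      ∑ j ∈ Finset.range (m + 1), (-1 : ℝ) ^ j * ∫ x in Ω, g j x * iteratedDeriv j ϑ x


/-- The action of the distribution `Σ_{j=0}^k ∂^j F_j` on a test function `ϑ` on `ℝ₊`. -/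
def negPair (k : ℕ) (F : ℕ → ℝ → ℝ) (ϑ : ℝ → ℝ) : ℝ :=
  ∑ j ∈ Finset.range (k + 1), (-1 : ℝ) ^ j * ∫ x in Ioi (0 : ℝ), F j x * iteratedDeriv j ϑ x

/-- On an open set, `iteratedDerivWithin` agrees with `iteratedDeriv`. -/
lemma iterDeriv_of_isOpen {U : Set ℝ} (hU : IsOpen U) (f : ℝ → ℝ) (n : ℕ) :
    Set.EqOn (iteratedDerivWithin n f U) (iteratedDeriv n f) U := by
  intro x hx
  rw [iteratedDerivWithin_eq_iteratedFDerivWithin, iteratedDeriv_eq_iteratedFDeriv,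
    iteratedFDerivWithin_of_isOpen n hU hx]

lemma iterDeriv_diffAt {U : Set ℝ} (hU : IsOpen U) {f : ℝ → ℝ}
    (hf : ContDiffOn ℝ (⊤ : ℕ∞) f U) (m : ℕ) {x : ℝ} (hx : x ∈ U) :
    DifferentiableAt ℝ (iteratedDeriv m f) x := by
  have h1 : DifferentiableWithinAt ℝ (iteratedDerivWithin m f U) U x :=
    hf.differentiableOn_iteratedDerivWithin (by exact_mod_cast WithTop.coe_lt_top _)
      hU.uniqueDiffOn x hx
  have h2 : DifferentiableAt ℝ (iteratedDerivWithin m f U) x :=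
    h1.differentiableAt (hU.mem_nhds hx)
  exact h2.congr_of_eventuallyEq
    (((iterDeriv_of_isOpen hU f m).eventuallyEq_of_mem (hU.mem_nhds hx)).symm)

lemma iterDeriv_contOn {U : Set ℝ} (hU : IsOpen U) {f : ℝ → ℝ}
    (hf : ContDiffOn ℝ (⊤ : ℕ∞) f U) (m : ℕ) :
    ContinuousOn (iteratedDeriv m f) U :=
  (hf.continuousOn_iteratedDerivWithin (by exact_mod_cast le_top) hU.uniqueDiffOn).congr
    (iterDeriv_of_isOpen hU f m).symm

/-- Leibniz formula for the `n`-th derivative of a product, at points of an open set. -/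
lemma iterDeriv_mul {U : Set ℝ} (hU : IsOpen U) {f g : ℝ → ℝ}
    (hf : ContDiffOn ℝ (⊤ : ℕ∞) f U) (hg : ContDiffOn ℝ (⊤ : ℕ∞) g U) (n : ℕ) :
    ∀ x ∈ U, iteratedDeriv n (fun y => f y * g y) x =
      ∑ i ∈ Finset.range (n + 1),
        (n.choose i : ℝ) * (iteratedDeriv i f x * iteratedDeriv (n - i) g x) := by
  induction n with
  | zero => intro x hx; simp [iteratedDeriv_zero]
  | succ n IH =>
    intro x hx
    have hfg : ContDiffOn ℝ (⊤ : ℕ∞) (fun y => f y * g y) U := hf.mul hg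
    have hev : iteratedDeriv n (fun y => f y * g y) =ᶠ[nhds x]
        (fun y => ∑ i ∈ Finset.range (n + 1),
          (n.choose i : ℝ) * (iteratedDeriv i f y * iteratedDeriv (n - i) g y)) :=
      Set.EqOn.eventuallyEq_of_mem (fun y hy => IH y hy) (hU.mem_nhds hx)
    have hterm : ∀ i ∈ Finset.range (n + 1), DifferentiableAt ℝ
        (fun y => (n.choose i : ℝ) * (iteratedDeriv i f y * iteratedDeriv (n - i) g y)) x :=
      fun i _ => (((iterDeriv_diffAt hU hf i hx).mul (iterDeriv_diffAt hU hg (n - i) hx)).const_mul _)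
    have hder : iteratedDeriv (n + 1) (fun y => f y * g y) x =
        ∑ i ∈ Finset.range (n + 1), (n.choose i : ℝ) *
          (iteratedDeriv (i + 1) f x * iteratedDeriv (n - i) g x
            + iteratedDeriv i f x * iteratedDeriv (n - i + 1) g x) := by
      rw [iteratedDeriv_succ, hev.deriv_eq, deriv_fun_sum hterm]
      refine Finset.sum_congr rfl fun i _ => ?_
      rw [deriv_const_mul (d := fun y => iteratedDeriv i f y * iteratedDeriv (n - i) g y) _ ((iterDeriv_diffAt hU hf i hx).mul (iterDeriv_diffAt hU hg (n - i) hx)),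
        deriv_fun_mul (iterDeriv_diffAt hU hf i hx) (iterDeriv_diffAt hU hg (n - i) hx)]
      rw [iteratedDeriv_succ, iteratedDeriv_succ]
    rw [hder]
    -- now the Pascal-triangle reshuffle
    have key : ∀ (A B : ℕ → ℝ),
        ∑ i ∈ Finset.range (n + 2), ((n+1).choose i : ℝ) * (A i * B (n + 1 - i)) =
          ∑ i ∈ Finset.range (n + 1), (n.choose i : ℝ) *
            (A (i + 1) * B (n - i) + A i * B (n + 1 - i)) := by
      intro A B
      rw [Finset.sum_range_succ' (fun i => ((n+1).choose i : ℝ) * (A i * B (n + 1 - i))) (n + 1)]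
      have h1 : ∀ i ∈ Finset.range (n + 1),
          ((n+1).choose (i+1) : ℝ) * (A (i+1) * B (n + 1 - (i+1))) =
            (n.choose i : ℝ) * (A (i+1) * B (n - i)) +
              (n.choose (i+1) : ℝ) * (A (i+1) * B (n - i)) := by
        intro i _
        have : n + 1 - (i + 1) = n - i := by omega
        rw [this, Nat.choose_succ_succ]
        push_cast
        ring
      rw [Finset.sum_congr rfl h1, Finset.sum_add_distrib]
      have h2 : ∑ i ∈ Finset.range (n + 1), (n.choose (i+1) : ℝ) * (A (i+1) * B (n - i)) +
          ((n+1).choose 0 : ℝ) * (A 0 * B (n + 1 - 0)) =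
          ∑ i ∈ Finset.range (n + 1), (n.choose i : ℝ) * (A i * B (n + 1 - i)) := by
        rw [Finset.sum_range_succ (fun i => (n.choose (i+1) : ℝ) * (A (i+1) * B (n - i))) n,
          Finset.sum_range_succ' (fun i => (n.choose i : ℝ) * (A i * B (n + 1 - i))) n]
        have hc : (n.choose (n+1) : ℝ) = 0 := by
          simp [Nat.choose_eq_zero_of_lt]
        rw [hc]
        simp only [zero_mul, add_zero]
        congr 1
        · refine Finset.sum_congr rfl fun i hi => ?_
          have : n + 1 - (i + 1) = n - i := by omega
          rw [this]
        · simp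
      rw [add_assoc, h2, ← Finset.sum_add_distrib]
      refine Finset.sum_congr rfl fun i _ => ?_
      ring
    rw [key (fun i => iteratedDeriv i f x) (fun i => iteratedDeriv i g x)]
    refine Finset.sum_congr rfl fun i hi => ?_
    have : n - i + 1 = n + 1 - i := by
      have := Finset.mem_range.mp hi; omega
    rw [this]

lemma iterDerivWithin_Ici_eq {f : ℝ → ℝ} {x : ℝ} (hx : 0 < x) (n : ℕ) :
    iteratedDerivWithin n f (Ici 0) x = iteratedDeriv n f x := by
  rw [iteratedDerivWithin_eq_iteratedFDerivWithin, iteratedDeriv_eq_iteratedFDeriv]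
  congr 1
  have h : Ici (0:ℝ) ∈ nhds x := Ici_mem_nhds hx
  conv_lhs => rw [← Set.univ_inter (Ici (0:ℝ))]
  rw [iteratedFDerivWithin_inter h, iteratedFDerivWithin_univ]

lemma choose_le_two_pow (n i : ℕ) : ((n.choose i : ℝ)) ≤ 2 ^ n := by
  have h : n.choose i ≤ 2 ^ n := by
    rcases lt_or_ge i (n+1) with hi | hi
    · calc n.choose i ≤ ∑ j ∈ Finset.range (n+1), n.choose j :=
            Finset.single_le_sum (fun j _ => Nat.zero_le _) (Finset.mem_range.mpr hi)
      _ = 2 ^ n := Nat.sum_range_choose n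
    · rw [Nat.choose_eq_zero_of_lt (by omega)]; positivity
  calc ((n.choose i : ℝ)) ≤ ((2^n : ℕ) : ℝ) := by exact_mod_cast h
  _ = 2 ^ n := by push_cast; ring

section Psi

variable {ψ : ℝ → ℝ} (hψ : IsAdmissibleWeight ψ)

lemma sqrtPsi_contDiffOn (hψ : IsAdmissibleWeight ψ) :
    ContDiffOn ℝ (⊤ : ℕ∞) (fun x => Real.sqrt (ψ x)) (Ioi 0) := by
  intro x hx
  have hψx : ContDiffAt ℝ (⊤ : ℕ∞) ψ x := hψ.1.contDiffAt (Ici_mem_nhds hx)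
  exact (hψx.sqrt (ne_of_gt (hψ.2.1 x (le_of_lt hx)))).contDiffWithinAt

lemma invSqrtPsi_contDiffOn (hψ : IsAdmissibleWeight ψ) :
    ContDiffOn ℝ (⊤ : ℕ∞) (fun x => (Real.sqrt (ψ x))⁻¹) (Ioi 0) := by
  intro x hx
  have hψx : ContDiffAt ℝ (⊤ : ℕ∞) ψ x := hψ.1.contDiffAt (Ici_mem_nhds hx)
  have h0 : (0:ℝ) < ψ x := hψ.2.1 x (le_of_lt hx)
  exact ((hψx.sqrt (ne_of_gt h0)).inv
    (ne_of_gt (Real.sqrt_pos.mpr h0))).contDiffWithinAt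

lemma sqrtPsi_bound (hψ : IsAdmissibleWeight ψ) (m : ℕ) :
    ∃ C : ℝ, 0 ≤ C ∧ ∀ x ∈ Ioi (0:ℝ),
      |iteratedDeriv m (fun y => Real.sqrt (ψ y)) x| ≤ C * Real.sqrt (ψ x) := by
  set s : ℝ → ℝ := fun y => Real.sqrt (ψ y) with hs
  induction m using Nat.strong_induction_on with
  | _ m ih =>
    match m with
    | 0 =>
      refine ⟨1, zero_le_one, fun x hx => ?_⟩
      rw [iteratedDeriv_zero, one_mul]
      exact le_of_eq (abs_of_nonneg (Real.sqrt_nonneg _))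
    | (n+1) =>
      -- constants from the induction hypothesis
      obtain ⟨D, hD⟩ : ∃ D : ℕ → ℝ, ∀ i, i < n + 1 → (0 ≤ D i ∧ ∀ x ∈ Ioi (0:ℝ),
          |iteratedDeriv i s x| ≤ D i * Real.sqrt (ψ x)) := by
        refine ⟨fun i => if h : i < n + 1 then (ih i h).choose else 0, fun i hi => ?_⟩
        simpa only [dif_pos hi] using (ih i hi).choose_spec
      set E : ℝ := ∑ i ∈ Finset.range (n+1), D i with hE
      have hE0 : 0 ≤ E := Finset.sum_nonneg fun i hi => (hD i (Finset.mem_range.mp hi)).1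
      have hDE : ∀ i, i < n + 1 → D i ≤ E := fun i hi =>
        Finset.single_le_sum (fun j hj => (hD j (Finset.mem_range.mp hj)).1)
          (Finset.mem_range.mpr hi)
      -- bound on the (n+1)-st derivative of ψ
      obtain ⟨cψ, hcψ⟩ := hψ.2.2.1 (n+1)
      set c₀ : ℝ := max cψ 0 with hc₀
      have hc₀0 : 0 ≤ c₀ := le_max_right _ _
      have hψd : ∀ x ∈ Ioi (0:ℝ), |iteratedDeriv (n+1) ψ x| ≤ c₀ * ψ x := by
        intro x hx
        have := hcψ x (le_of_lt hx)
        rw [iterDerivWithin_Ici_eq hx] at this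
        exact this.trans (mul_le_mul_of_nonneg_right (le_max_left _ _)
          (le_of_lt (hψ.2.1 x (le_of_lt hx))))
      set K : ℝ := c₀ + n * (2^(n+1) * E * E) with hK
      refine ⟨K / 2, by positivity, fun x hx => ?_⟩
      have hψx : (0:ℝ) < ψ x := hψ.2.1 x (le_of_lt hx)
      have hsx : (0:ℝ) < s x := Real.sqrt_pos.mpr hψx
      have hss : Set.EqOn (fun y => s y * s y) ψ (Ioi 0) := fun y hy =>
        Real.mul_self_sqrt (le_of_lt (hψ.2.1 y (le_of_lt hy)))
      have E1 : iteratedDeriv (n+1) ψ x =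
          ∑ i ∈ Finset.range (n+2), ((n+1).choose i : ℝ) *
            (iteratedDeriv i s x * iteratedDeriv (n+1-i) s x) := by
        rw [← hss.iteratedDeriv_of_isOpen isOpen_Ioi (n+1) hx]
        exact iterDeriv_mul isOpen_Ioi (sqrtPsi_contDiffOn hψ) (sqrtPsi_contDiffOn hψ) (n+1) x hx
      set a : ℕ → ℝ := fun i => ((n+1).choose i : ℝ) *
        (iteratedDeriv i s x * iteratedDeriv (n+1-i) s x) with ha
      have Esplit : ∑ i ∈ Finset.range (n+2), a i =
          (∑ i ∈ Finset.range n, a (i+1)) + a 0 + a (n+1) := by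
        rw [Finset.sum_range_succ a (n+1), Finset.sum_range_succ' a n]
      have ha0 : a 0 = s x * iteratedDeriv (n+1) s x := by
        simp [ha, iteratedDeriv_zero]
      have han : a (n+1) = iteratedDeriv (n+1) s x * s x := by
        simp [ha, iteratedDeriv_zero]
      have hM : |∑ i ∈ Finset.range n, a (i+1)| ≤ n * (2^(n+1) * E * E) * ψ x := by
        calc |∑ i ∈ Finset.range n, a (i+1)| ≤ ∑ i ∈ Finset.range n, |a (i+1)| :=
              Finset.abs_sum_le_sum_abs _ _
        _ ≤ ∑ i ∈ Finset.range n, 2^(n+1) * E * E * ψ x := by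
              refine Finset.sum_le_sum fun i hi => ?_
              have hi' := Finset.mem_range.mp hi
              have h1 : |iteratedDeriv (i+1) s x| ≤ E * Real.sqrt (ψ x) := by
                refine le_trans ((hD (i+1) (by omega)).2 x hx) ?_
                exact mul_le_mul_of_nonneg_right (hDE _ (by omega)) (Real.sqrt_nonneg _)
              have h2 : |iteratedDeriv (n+1-(i+1)) s x| ≤ E * Real.sqrt (ψ x) := by
                have hidx : n+1-(i+1) = n-i := by omega
                rw [hidx]
                exact le_trans ((hD (n-i) (by omega)).2 x hx)
                  (mul_le_mul_of_nonneg_right (hDE _ (by omega)) (Real.sqrt_nonneg _))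
              have hch : ((n+1).choose (i+1) : ℝ) ≤ 2^(n+1) := choose_le_two_pow _ _
              have hsq : Real.sqrt (ψ x) * Real.sqrt (ψ x) = ψ x :=
                Real.mul_self_sqrt (le_of_lt hψx)
              have : |a (i+1)| = ((n+1).choose (i+1) : ℝ) *
                  (|iteratedDeriv (i+1) s x| * |iteratedDeriv (n+1-(i+1)) s x|) := by
                rw [ha]
                dsimp only
                rw [abs_mul, abs_mul, Nat.abs_cast]
              rw [this]
              calc ((n+1).choose (i+1) : ℝ) *
                    (|iteratedDeriv (i+1) s x| * |iteratedDeriv (n+1-(i+1)) s x|)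
                  ≤ 2^(n+1) * ((E * Real.sqrt (ψ x)) * (E * Real.sqrt (ψ x))) := by
                    refine mul_le_mul hch ?_ (by positivity) (by positivity)
                    exact mul_le_mul h1 h2 (abs_nonneg _) (by positivity)
              _ = 2^(n+1) * E * E * (Real.sqrt (ψ x) * Real.sqrt (ψ x)) := by ring
              _ = 2^(n+1) * E * E * ψ x := by rw [hsq]
        _ ≤ n * (2^(n+1) * E * E * ψ x) := by
              rw [Finset.sum_const, Finset.card_range, nsmul_eq_mul]
        _ = n * (2^(n+1) * E * E) * ψ x := by ring
      have Ekey : 2 * (s x * iteratedDeriv (n+1) s x) =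
          iteratedDeriv (n+1) ψ x - ∑ i ∈ Finset.range n, a (i+1) := by
        rw [E1]
        rw [show ∑ i ∈ Finset.range (n+2), ((n+1).choose i : ℝ) *
              (iteratedDeriv i s x * iteratedDeriv (n+1-i) s x)
            = ∑ i ∈ Finset.range (n+2), a i from rfl, Esplit, ha0, han]
        ring
      have hb : 2 * (s x * |iteratedDeriv (n+1) s x|) ≤ K * (s x * s x) := by
        have h1 : |2 * (s x * iteratedDeriv (n+1) s x)| ≤ c₀ * ψ x + n * (2^(n+1) * E * E) * ψ x := by
          rw [Ekey]
          exact (abs_sub _ _).trans (add_le_add (hψd x hx) hM)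
        have h2 : |2 * (s x * iteratedDeriv (n+1) s x)| =
            2 * (s x * |iteratedDeriv (n+1) s x|) := by
          rw [abs_mul, abs_mul, abs_of_nonneg (by norm_num : (0:ℝ) ≤ 2),
            abs_of_nonneg (le_of_lt hsx)]
        rw [h2] at h1
        have h3 : s x * s x = ψ x := Real.mul_self_sqrt (le_of_lt hψx)
        rw [h3]
        calc 2 * (s x * |iteratedDeriv (n+1) s x|) ≤ c₀ * ψ x + n * (2^(n+1) * E * E) * ψ x := h1
        _ = K * ψ x := by rw [hK]; ring
      nlinarith [abs_nonneg (iteratedDeriv (n+1) s x), hsx]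

lemma invSqrtPsi_bound {ψ : ℝ → ℝ} (hψ : IsAdmissibleWeight ψ) (m : ℕ) :
    ∃ C : ℝ, 0 ≤ C ∧ ∀ x ∈ Ioi (0:ℝ),
      |iteratedDeriv m (fun y => (Real.sqrt (ψ y))⁻¹) x| ≤ C * (Real.sqrt (ψ x))⁻¹ := by
  set s : ℝ → ℝ := fun y => Real.sqrt (ψ y) with hs
  set t : ℝ → ℝ := fun y => (Real.sqrt (ψ y))⁻¹ with ht
  obtain ⟨Sc, hSc⟩ : ∃ Sc : ℕ → ℝ, ∀ i, 0 ≤ Sc i ∧ ∀ x ∈ Ioi (0:ℝ),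
      |iteratedDeriv i s x| ≤ Sc i * Real.sqrt (ψ x) := by
    refine ⟨fun i => (sqrtPsi_bound hψ i).choose, fun i => (sqrtPsi_bound hψ i).choose_spec⟩
  induction m using Nat.strong_induction_on with
  | _ m ih =>
    match m with
    | 0 =>
      refine ⟨1, zero_le_one, fun x hx => ?_⟩
      rw [iteratedDeriv_zero, one_mul]
      exact le_of_eq (abs_of_nonneg (by positivity))
    | (n+1) =>
      obtain ⟨D, hD⟩ : ∃ D : ℕ → ℝ, ∀ i, i < n + 1 → (0 ≤ D i ∧ ∀ x ∈ Ioi (0:ℝ),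
          |iteratedDeriv i t x| ≤ D i * (Real.sqrt (ψ x))⁻¹) := by
        refine ⟨fun i => if h : i < n + 1 then (ih i h).choose else 0, fun i hi => ?_⟩
        simpa only [dif_pos hi] using (ih i hi).choose_spec
      set E : ℝ := ∑ i ∈ Finset.range (n+1), D i with hE
      have hE0 : 0 ≤ E := Finset.sum_nonneg fun i hi => (hD i (Finset.mem_range.mp hi)).1
      have hDE : ∀ i, i < n + 1 → D i ≤ E := fun i hi =>
        Finset.single_le_sum (fun j hj => (hD j (Finset.mem_range.mp hj)).1)
          (Finset.mem_range.mpr hi)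
      set SE : ℝ := ∑ i ∈ Finset.range (n+2), Sc i with hSE
      have hSE0 : 0 ≤ SE := Finset.sum_nonneg fun i _ => (hSc i).1
      have hScE : ∀ i, i < n + 2 → Sc i ≤ SE := fun i hi =>
        Finset.single_le_sum (fun j _ => (hSc j).1) (Finset.mem_range.mpr hi)
      set K : ℝ := (n+1) * (2^(n+1) * E * SE) with hK
      refine ⟨K, by positivity, fun x hx => ?_⟩
      have hψx : (0:ℝ) < ψ x := hψ.2.1 x (le_of_lt hx)
      have hsx : (0:ℝ) < s x := Real.sqrt_pos.mpr hψx
      have htx : t x = (s x)⁻¹ := rfl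
      have hts : t x * s x = 1 := inv_mul_cancel₀ (ne_of_gt hsx)
      have hone : Set.EqOn (fun y => t y * s y) (fun _ => (1:ℝ)) (Ioi 0) := by
        intro y hy
        exact inv_mul_cancel₀ (ne_of_gt (Real.sqrt_pos.mpr (hψ.2.1 y (le_of_lt hy))))
      have hzero : ∀ nn : ℕ, iteratedDeriv nn (fun _ : ℝ => (0:ℝ)) = fun _ => 0 := by
        intro nn
        induction nn with
        | zero => funext y; simp [iteratedDeriv_zero]
        | succ nn ihn =>
          funext y
          rw [iteratedDeriv_succ, ihn]
          simp
      have hconst : iteratedDeriv (n+1) (fun _ : ℝ => (1:ℝ)) x = 0 := by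
        have h1 : deriv (fun _ : ℝ => (1:ℝ)) = fun _ : ℝ => (0:ℝ) := by
          funext y; simp
        rw [iteratedDeriv_succ', h1, hzero n]
      have E1 : (0:ℝ) =
          ∑ i ∈ Finset.range (n+2), ((n+1).choose i : ℝ) *
            (iteratedDeriv i t x * iteratedDeriv (n+1-i) s x) := by
        rw [← iterDeriv_mul isOpen_Ioi (invSqrtPsi_contDiffOn hψ) (sqrtPsi_contDiffOn hψ) (n+1) x hx,
          hone.iteratedDeriv_of_isOpen isOpen_Ioi (n+1) hx, hconst]
      set a : ℕ → ℝ := fun i => ((n+1).choose i : ℝ) *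
        (iteratedDeriv i t x * iteratedDeriv (n+1-i) s x) with ha
      have Esplit : ∑ i ∈ Finset.range (n+2), a i =
          (∑ i ∈ Finset.range (n+1), a i) + a (n+1) := Finset.sum_range_succ a (n+1)
      have han : a (n+1) = iteratedDeriv (n+1) t x * s x := by
        simp [ha, iteratedDeriv_zero]
      have hM : |∑ i ∈ Finset.range (n+1), a i| ≤ K := by
        calc |∑ i ∈ Finset.range (n+1), a i| ≤ ∑ i ∈ Finset.range (n+1), |a i| :=
              Finset.abs_sum_le_sum_abs _ _
        _ ≤ ∑ i ∈ Finset.range (n+1), 2^(n+1) * E * SE := by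
              refine Finset.sum_le_sum fun i hi => ?_
              have hi' := Finset.mem_range.mp hi
              have h1 : |iteratedDeriv i t x| ≤ E * (Real.sqrt (ψ x))⁻¹ :=
                le_trans ((hD i hi').2 x hx)
                  (mul_le_mul_of_nonneg_right (hDE _ hi') (by positivity))
              have h2 : |iteratedDeriv (n+1-i) s x| ≤ SE * Real.sqrt (ψ x) :=
                le_trans ((hSc (n+1-i)).2 x hx)
                  (mul_le_mul_of_nonneg_right (hScE _ (by omega)) (Real.sqrt_nonneg _))
              have hch : ((n+1).choose i : ℝ) ≤ 2^(n+1) := choose_le_two_pow _ _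
              have habs : |a i| = ((n+1).choose i : ℝ) *
                  (|iteratedDeriv i t x| * |iteratedDeriv (n+1-i) s x|) := by
                rw [ha]
                dsimp only
                rw [abs_mul, abs_mul, Nat.abs_cast]
              rw [habs]
              have hprod : (Real.sqrt (ψ x))⁻¹ * Real.sqrt (ψ x) = 1 :=
                inv_mul_cancel₀ (ne_of_gt hsx)
              calc ((n+1).choose i : ℝ) * (|iteratedDeriv i t x| * |iteratedDeriv (n+1-i) s x|)
                  ≤ 2^(n+1) * ((E * (Real.sqrt (ψ x))⁻¹) * (SE * Real.sqrt (ψ x))) := by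
                    refine mul_le_mul hch ?_ (by positivity) (by positivity)
                    exact mul_le_mul h1 h2 (abs_nonneg _) (by positivity)
              _ = 2^(n+1) * E * SE * ((Real.sqrt (ψ x))⁻¹ * Real.sqrt (ψ x)) := by ring
              _ = 2^(n+1) * E * SE := by rw [hprod, mul_one]
        _ = K := by
              rw [Finset.sum_const, Finset.card_range, nsmul_eq_mul, hK]
              push_cast
              ring
      have Ekey : iteratedDeriv (n+1) t x * s x = -∑ i ∈ Finset.range (n+1), a i := by
        have := E1
        rw [Esplit, han] at this
        linarith
      have hb : |iteratedDeriv (n+1) t x| * s x ≤ K := by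
        have : |iteratedDeriv (n+1) t x * s x| ≤ K := by
          rw [Ekey, abs_neg]; exact hM
        rwa [abs_mul, abs_of_nonneg (le_of_lt hsx)] at this
      have : |iteratedDeriv (n+1) t x| ≤ K / s x := (le_div_iff₀ hsx).mpr hb
      calc |iteratedDeriv (n+1) t x| ≤ K / s x := this
      _ = K * (Real.sqrt (ψ x))⁻¹ := by rw [div_eq_mul_inv]

end Psi

lemma tsupport_iterDeriv (ϑ : ℝ → ℝ) (i : ℕ) :
    tsupport (iteratedDeriv i ϑ) ⊆ tsupport ϑ := by
  induction i with
  | zero => rw [iteratedDeriv_zero]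
  | succ i ih =>
    rw [iteratedDeriv_succ]
    exact (closure_minimal support_deriv_subset isClosed_closure).trans ih

lemma double_sum_swap (t : ℕ → ℕ → ℝ) (k : ℕ) :
    ∑ i ∈ Finset.range (k+1), ∑ r ∈ Finset.range (k+1-i), t i r
      = ∑ j ∈ Finset.range (k+1), ∑ i ∈ Finset.range (j+1), t i (j - i) := by
  induction k with
  | zero => simp
  | succ k IH =>
    have hL : ∑ i ∈ Finset.range (k+2), ∑ r ∈ Finset.range (k+2-i), t i r
        = (∑ i ∈ Finset.range (k+1), ∑ r ∈ Finset.range (k+1-i), t i r)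
          + ∑ i ∈ Finset.range (k+2), t i (k+1-i) := by
      rw [Finset.sum_range_succ (fun i => ∑ r ∈ Finset.range (k+2-i), t i r) (k+1),
        Finset.sum_range_succ (fun i => t i (k+1-i)) (k+1)]
      have h1 : ∀ i ∈ Finset.range (k+1), ∑ r ∈ Finset.range (k+2-i), t i r
          = (∑ r ∈ Finset.range (k+1-i), t i r) + t i (k+1-i) := by
        intro i hi
        have hi' := Finset.mem_range.mp hi
        have h2 : k+2-i = (k+1-i)+1 := by omega
        rw [h2, Finset.sum_range_succ]
      rw [Finset.sum_congr rfl h1, Finset.sum_add_distrib]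
      have h3 : k+2-(k+1) = 1 := by omega
      have h4 : k+1-(k+1) = 0 := by omega
      rw [h3, h4, Finset.sum_range_one]
      ring
    rw [hL, IH, Finset.sum_range_succ
      (fun j => ∑ i ∈ Finset.range (j+1), t i (j - i)) (k+1)]

lemma main_rep (k : ℕ) (w a b : ℝ → ℝ)
    (hw : ContDiffOn ℝ (⊤ : ℕ∞) w (Ioi 0))
    (ha_pos : ∀ x ∈ Ioi (0:ℝ), 0 < a x)
    (ha_cont : ContinuousOn a (Ioi 0))
    (hb_cont : ContinuousOn b (Ioi 0))
    (hb_nonneg : ∀ x ∈ Ioi (0:ℝ), 0 ≤ b x)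
    (hbound : ∀ m : ℕ, ∃ C : ℝ, 0 ≤ C ∧ ∀ x ∈ Ioi (0:ℝ),
      |iteratedDeriv m w x| * b x ≤ C * a x) :
    ∃ c : ℝ, 0 < c ∧ ∀ F : ℕ → ℝ → ℝ,
      (∀ j : ℕ, j ≤ k → MemLp (fun x => F j x * a x) 2 (volume.restrict (Ioi 0))) →
      ∃ G : ℕ → ℝ → ℝ,
        (∀ j : ℕ, j ≤ k → MemLp (fun x => G j x * b x) 2 (volume.restrict (Ioi 0))) ∧
        (∀ ϑ : ℝ → ℝ, ContDiff ℝ (⊤ : ℕ∞) ϑ → HasCompactSupport ϑ → tsupport ϑ ⊆ Ioi 0 →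
          negPair k G ϑ = negPair k F (fun x => w x * ϑ x)) ∧
        Real.sqrt (∑ j ∈ Finset.range (k + 1), ∫ x in Ioi (0 : ℝ), (G j x * b x) ^ 2) ≤
          c * Real.sqrt (∑ j ∈ Finset.range (k + 1), ∫ x in Ioi (0 : ℝ), (F j x * a x) ^ 2) := by
  classical
  obtain ⟨C, hC⟩ : ∃ C : ℕ → ℝ, ∀ m, 0 ≤ C m ∧ ∀ x ∈ Ioi (0:ℝ),
      |iteratedDeriv m w x| * b x ≤ C m * a x :=
    ⟨fun m => (hbound m).choose, fun m => (hbound m).choose_spec⟩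
  set D₀ : ℝ := 2^k * ∑ r ∈ Finset.range (k+1), C r with hD₀
  have hD₀0 : 0 ≤ D₀ := by
    have : 0 ≤ ∑ r ∈ Finset.range (k+1), C r := Finset.sum_nonneg fun r _ => (hC r).1
    positivity
  refine ⟨(k+1) * (D₀ + 1), by positivity, fun F hF => ?_⟩
  set U : Set ℝ := Ioi (0:ℝ) with hU
  set μU := volume.restrict (Ioi (0:ℝ)) with hμU
  set G : ℕ → ℝ → ℝ := fun i x => ∑ r ∈ Finset.range (k + 1 - i),
    (-1:ℝ)^r * ((i+r).choose i : ℝ) * (F (i+r) x * iteratedDeriv r w x) with hG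
  -- measurability of the `F j`
  have hainv : ContinuousOn (fun x => (a x)⁻¹) U :=
    ha_cont.inv₀ fun x hx => ne_of_gt (ha_pos x hx)
  have hFmeas : ∀ j, j ≤ k → AEStronglyMeasurable (F j) μU := by
    intro j hj
    have h1 : AEStronglyMeasurable (fun x => (F j x * a x) * (a x)⁻¹) μU :=
      (hF j hj).1.mul (hainv.aestronglyMeasurable measurableSet_Ioi)
    refine h1.congr ?_
    filter_upwards [ae_restrict_mem measurableSet_Ioi] with x hx
    have : a x ≠ 0 := ne_of_gt (ha_pos x hx)
    field_simp
  have hGbmeas : ∀ i, i ≤ k → AEStronglyMeasurable (fun x => G i x * b x) μU := by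
    intro i hi
    have h1 : ∀ r ∈ Finset.range (k + 1 - i), AEStronglyMeasurable
        (fun x => (-1:ℝ)^r * ((i+r).choose i : ℝ) * (F (i+r) x * iteratedDeriv r w x)) μU := by
      intro r hr
      have hik : i + r ≤ k := by have := Finset.mem_range.mp hr; omega
      exact ((hFmeas (i+r) hik).mul
        (((iterDeriv_contOn isOpen_Ioi hw r).aestronglyMeasurable
          measurableSet_Ioi))).const_mul _
    have h2 : AEStronglyMeasurable (G i) μU := by
      rw [hG]
      exact Finset.aestronglyMeasurable_fun_sum _ h1
    exact h2.mul (hb_cont.aestronglyMeasurable measurableSet_Ioi)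
  -- the controlling L² function
  set S : ℝ → ℝ := fun x => ∑ j ∈ Finset.range (k+1), |F j x * a x| with hS
  have hSmem : MemLp S 2 μU := by
    rw [hS]
    exact memLp_finset_sum (μ := μU) (p := 2) (Finset.range (k+1))
      (f := fun j (x:ℝ) => |F j x * a x|) (fun j hj => by
        simpa only [Real.norm_eq_abs] using
          (hF j (Nat.lt_succ_iff.mp (Finset.mem_range.mp hj))).norm)
  have hSnn : ∀ x, 0 ≤ S x := fun x => Finset.sum_nonneg fun j _ => abs_nonneg _
  have hGb_bound : ∀ i, i ≤ k → ∀ x ∈ U, |G i x * b x| ≤ D₀ * S x := by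
    intro i hi x hx
    have hbx := hb_nonneg x hx
    have hax := ha_pos x hx
    calc |G i x * b x| = |∑ r ∈ Finset.range (k+1-i),
        (-1:ℝ)^r * ((i+r).choose i : ℝ) * (F (i+r) x * iteratedDeriv r w x) * b x| := by
          rw [hG, ← Finset.sum_mul]
    _ ≤ ∑ r ∈ Finset.range (k+1-i), |(-1:ℝ)^r * ((i+r).choose i : ℝ) *
          (F (i+r) x * iteratedDeriv r w x) * b x| := Finset.abs_sum_le_sum_abs _ _
    _ ≤ ∑ r ∈ Finset.range (k+1-i), 2^k * C r * S x := by
          refine Finset.sum_le_sum fun r hr => ?_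
          have hik : i + r ≤ k := by have := Finset.mem_range.mp hr; omega
          have h1 : |(-1:ℝ)^r * ((i+r).choose i : ℝ) * (F (i+r) x * iteratedDeriv r w x) * b x|
              = ((i+r).choose i : ℝ) * (|F (i+r) x| * (|iteratedDeriv r w x| * b x)) := by
            rw [abs_mul, abs_mul, abs_mul, abs_mul, abs_pow, abs_neg, abs_one, one_pow,
              one_mul, Nat.abs_cast, abs_of_nonneg hbx]
            ring
          rw [h1]
          have h2 : ((i+r).choose i : ℝ) ≤ 2^k :=
            (choose_le_two_pow _ _).trans (pow_le_pow_right₀ one_le_two hik)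
          have h3 : |iteratedDeriv r w x| * b x ≤ C r * a x := (hC r).2 x hx
          have hC0 := (hC r).1
          have h5 : |F (i+r) x * a x| ≤ S x :=
            Finset.single_le_sum (fun j _ => abs_nonneg (F j x * a x))
              (Finset.mem_range.mpr (by omega))
          have h6 : |F (i+r) x| * a x = |F (i+r) x * a x| := by
            rw [abs_mul, abs_of_nonneg (le_of_lt hax)]
          calc ((i+r).choose i : ℝ) * (|F (i+r) x| * (|iteratedDeriv r w x| * b x))
              ≤ 2^k * (|F (i+r) x| * (C r * a x)) := by
                refine mul_le_mul h2 (mul_le_mul_of_nonneg_left h3 (abs_nonneg _))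
                  (by positivity) (by positivity)
          _ = 2^k * C r * (|F (i+r) x| * a x) := by ring
          _ = 2^k * C r * |F (i+r) x * a x| := by rw [h6]
          _ ≤ 2^k * C r * S x := by
                refine mul_le_mul_of_nonneg_left h5 (by positivity)
    _ ≤ ∑ r ∈ Finset.range (k+1), 2^k * C r * S x := by
          refine Finset.sum_le_sum_of_subset_of_nonneg
            (Finset.range_subset_range.mpr (by omega)) fun r _ _ => ?_
          have := (hC r).1
          have := hSnn x
          positivity
    _ = D₀ * S x := by
          rw [hD₀]
          rw [← Finset.sum_mul, ← Finset.mul_sum]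
  have hGbmem : ∀ i, i ≤ k → MemLp (fun x => G i x * b x) 2 μU := by
    intro i hi
    refine MemLp.of_le (hSmem.const_mul D₀) (hGbmeas i hi) ?_
    filter_upwards [ae_restrict_mem measurableSet_Ioi] with x hx
    rw [Real.norm_eq_abs, Real.norm_eq_abs]
    exact (hGb_bound i hi x hx).trans (le_abs_self _)
  -- norm estimate
  set T : ℝ := ∑ j ∈ Finset.range (k+1), ∫ x in Ioi (0:ℝ), (F j x * a x)^2 with hT
  have hTnn : 0 ≤ T :=
    Finset.sum_nonneg fun j _ => integral_nonneg fun x => sq_nonneg _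
  have hFsq_int : ∀ j ∈ Finset.range (k+1), Integrable (fun x => (F j x * a x)^2) μU :=
    fun j hj => (hF j (Nat.lt_succ_iff.mp (Finset.mem_range.mp hj))).integrable_sq
  have hS2 : ∫ x in Ioi (0:ℝ), S x ^ 2 ≤ (k+1) * T := by
    have hpt : ∀ x, S x ^ 2 ≤ (k+1) * ∑ j ∈ Finset.range (k+1), (F j x * a x)^2 := by
      intro x
      have h := sq_sum_le_card_mul_sum_sq (s := Finset.range (k+1))
        (f := fun j => |F j x * a x|)
      simp only [Finset.card_range, sq_abs] at h
      calc S x ^ 2 = (∑ j ∈ Finset.range (k+1), |F j x * a x|)^2 := by rw [hS]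
      _ ≤ ((k+1 : ℕ) : ℝ) * ∑ j ∈ Finset.range (k+1), (F j x * a x)^2 := h
      _ = (k+1) * ∑ j ∈ Finset.range (k+1), (F j x * a x)^2 := by push_cast; ring
    calc ∫ x in Ioi (0:ℝ), S x ^ 2
        ≤ ∫ x in Ioi (0:ℝ), (k+1) * ∑ j ∈ Finset.range (k+1), (F j x * a x)^2 :=
          integral_mono hSmem.integrable_sq
            ((integrable_finset_sum _ hFsq_int).const_mul _) hpt
    _ = (k+1) * T := by
          rw [integral_const_mul, integral_finset_sum _ hFsq_int]
  have hstep1 : ∀ i, i ≤ k → ∫ x in Ioi (0:ℝ), (G i x * b x)^2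
      ≤ D₀^2 * ∫ x in Ioi (0:ℝ), S x ^ 2 := by
    intro i hi
    have h1 : ∫ x in Ioi (0:ℝ), (G i x * b x)^2 ≤ ∫ x in Ioi (0:ℝ), D₀^2 * S x ^ 2 := by
      refine integral_mono_ae ((hGbmem i hi).integrable_sq)
        (hSmem.integrable_sq.const_mul _) ?_
      filter_upwards [ae_restrict_mem measurableSet_Ioi] with x hx
      have h2 := hGb_bound i hi x hx
      have h3 := mul_le_mul h2 h2 (abs_nonneg _) (mul_nonneg hD₀0 (hSnn x))
      calc (G i x * b x)^2 = |G i x * b x| * |G i x * b x| := by rw [← sq_abs]; ring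
      _ ≤ (D₀ * S x) * (D₀ * S x) := h3
      _ = D₀^2 * S x ^ 2 := by ring
    calc ∫ x in Ioi (0:ℝ), (G i x * b x)^2 ≤ ∫ x in Ioi (0:ℝ), D₀^2 * S x ^ 2 := h1
    _ = D₀^2 * ∫ x in Ioi (0:ℝ), S x ^ 2 := integral_const_mul _ _
  have hsum : ∑ i ∈ Finset.range (k+1), ∫ x in Ioi (0:ℝ), (G i x * b x)^2
      ≤ (((k:ℝ)+1) * (D₀+1))^2 * T := by
    have hSnni : 0 ≤ ∫ x in Ioi (0:ℝ), S x ^ 2 := integral_nonneg fun x => sq_nonneg _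
    calc ∑ i ∈ Finset.range (k+1), ∫ x in Ioi (0:ℝ), (G i x * b x)^2
        ≤ ∑ _i ∈ Finset.range (k+1), D₀^2 * ∫ x in Ioi (0:ℝ), S x ^ 2 :=
          Finset.sum_le_sum fun i hi =>
            hstep1 i (Nat.lt_succ_iff.mp (Finset.mem_range.mp hi))
    _ = ((k:ℝ)+1) * (D₀^2 * ∫ x in Ioi (0:ℝ), S x ^ 2) := by
          rw [Finset.sum_const, Finset.card_range, nsmul_eq_mul]
          push_cast
          ring
    _ ≤ ((k:ℝ)+1) * (D₀^2 * ((k+1) * T)) := by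
          refine mul_le_mul_of_nonneg_left
            (mul_le_mul_of_nonneg_left hS2 (sq_nonneg _)) (by positivity)
    _ = (((k:ℝ)+1) * D₀)^2 * T := by ring
    _ ≤ (((k:ℝ)+1) * (D₀+1))^2 * T := by
          refine mul_le_mul_of_nonneg_right ?_ hTnn
          refine pow_le_pow_left₀ (by positivity) ?_ 2
          have : (0:ℝ) ≤ (k:ℝ)+1 := by positivity
          nlinarith
  have hnorm : Real.sqrt (∑ j ∈ Finset.range (k + 1), ∫ x in Ioi (0 : ℝ), (G j x * b x) ^ 2) ≤
      ((k:ℝ)+1) * (D₀ + 1) * Real.sqrt T := by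
    have h1 := Real.sqrt_le_sqrt hsum
    rwa [Real.sqrt_mul (sq_nonneg _), Real.sqrt_sq (by positivity)] at h1
  -- the pairing identity
  have hpair : ∀ ϑ : ℝ → ℝ, ContDiff ℝ (⊤ : ℕ∞) ϑ → HasCompactSupport ϑ → tsupport ϑ ⊆ Ioi 0 →
      negPair k G ϑ = negPair k F (fun x => w x * ϑ x) := by
    intro ϑ hϑ hϑc hϑs
    set Φ : ℕ → ℕ → ℝ → ℝ :=
      fun r i x => iteratedDeriv r w x * iteratedDeriv i ϑ x * (a x)⁻¹ with hΦ
    have hϑcont : ∀ i : ℕ, Continuous (iteratedDeriv i ϑ) := fun i =>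
      hϑ.continuous_iteratedDeriv i (by exact_mod_cast le_top)
    have hΦcont : ∀ r i, ContinuousOn (Φ r i) U := fun r i =>
      ((iterDeriv_contOn isOpen_Ioi hw r).mul ((hϑcont i).continuousOn)).mul hainv
    have hK : IsCompact (tsupport ϑ) := hϑc
    have hΦzero : ∀ r i x, x ∉ tsupport ϑ → Φ r i x = 0 := by
      intro r i x hx
      have h0 : iteratedDeriv i ϑ x = 0 :=
        image_eq_zero_of_notMem_tsupport (fun hmem => hx (tsupport_iterDeriv ϑ i hmem))
      simp [hΦ, h0]
    have hΦmem : ∀ r i, MemLp (Φ r i) 2 μU := by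
      intro r i
      obtain ⟨M, hM⟩ := hK.exists_bound_of_continuousOn ((hΦcont r i).mono hϑs)
      set M' : ℝ := max M 0 with hM'
      have hbnd : ∀ x, ‖Φ r i x‖ ≤ ‖(tsupport ϑ).indicator (fun _ => M') x‖ := by
        intro x
        by_cases hx : x ∈ tsupport ϑ
        · rw [Set.indicator_of_mem hx]
          calc ‖Φ r i x‖ ≤ M := hM x hx
          _ ≤ M' := le_max_left _ _
          _ = ‖M'‖ := (Real.norm_of_nonneg (le_max_right _ _)).symm
        · rw [Set.indicator_of_notMem hx, hΦzero r i x hx]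
      have hμK : μU (tsupport ϑ) ≠ ∞ := by
        refine ne_of_lt (lt_of_le_of_lt ?_ (hK.measure_lt_top (μ := volume)))
        rw [hμU, Measure.restrict_apply hK.isClosed.measurableSet]
        exact measure_mono Set.inter_subset_left
      exact MemLp.of_le
        (memLp_indicator_const 2 hK.isClosed.measurableSet M' (Or.inr hμK))
        ((hΦcont r i).aestronglyMeasurable measurableSet_Ioi)
        (Filter.Eventually.of_forall hbnd)
    have hint : ∀ j, j ≤ k → ∀ r i, Integrable (fun x => Φ r i x * (F j x * a x)) μU := by
      intro j hj r i
      have h1 : MemLp (Φ r i • fun x => F j x * a x) 1 μU :=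
        (hF j hj).smul (hΦmem r i) (hpqr := ⟨by rw [inv_one]; exact ENNReal.inv_two_add_inv_two⟩)
      exact memLp_one_iff_integrable.mp h1
    have hptw : ∀ j r i, ∀ x ∈ U,
        F j x * (iteratedDeriv r w x * iteratedDeriv i ϑ x) = Φ r i x * (F j x * a x) := by
      intro j r i x hx
      have hax : a x ≠ 0 := ne_of_gt (ha_pos x hx)
      rw [hΦ]
      field_simp
    have hGint : ∀ i, i ≤ k → ∫ x in Ioi (0:ℝ), G i x * iteratedDeriv i ϑ x =
        ∑ r ∈ Finset.range (k+1-i), (-1:ℝ)^r * ((i+r).choose i : ℝ) *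
          ∫ x in Ioi (0:ℝ), Φ r i x * (F (i+r) x * a x) := by
      intro i hi
      have h1 : Set.EqOn (fun x => G i x * iteratedDeriv i ϑ x)
          (fun x => ∑ r ∈ Finset.range (k+1-i), (-1:ℝ)^r * ((i+r).choose i : ℝ) *
            (Φ r i x * (F (i+r) x * a x))) (Ioi 0) := by
        intro x hx
        simp only [hG]
        rw [Finset.sum_mul]
        refine Finset.sum_congr rfl fun r hr => ?_
        have h2 := hptw (i+r) r i x hx
        linear_combination ((-1:ℝ)^r * ((i+r).choose i : ℝ)) * h2
      rw [setIntegral_congr_fun measurableSet_Ioi h1]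
      rw [integral_finset_sum _ (fun r hr => by
        have hik : i + r ≤ k := by have := Finset.mem_range.mp hr; omega
        exact (hint (i+r) hik r i).const_mul _)]
      exact Finset.sum_congr rfl fun r hr => integral_const_mul _ _
    have hFint : ∀ j, j ≤ k →
        ∫ x in Ioi (0:ℝ), F j x * iteratedDeriv j (fun y => w y * ϑ y) x =
        ∑ i ∈ Finset.range (j+1), (j.choose i : ℝ) *
          ∫ x in Ioi (0:ℝ), Φ i (j-i) x * (F j x * a x) := by
      intro j hj
      have h1 : Set.EqOn (fun x => F j x * iteratedDeriv j (fun y => w y * ϑ y) x)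
          (fun x => ∑ i ∈ Finset.range (j+1), (j.choose i : ℝ) *
            (Φ i (j-i) x * (F j x * a x))) (Ioi 0) := by
        intro x hx
        simp only
        rw [iterDeriv_mul isOpen_Ioi hw (hϑ.contDiffOn) j x hx, Finset.mul_sum]
        refine Finset.sum_congr rfl fun i hi => ?_
        have h2 := hptw j i (j-i) x hx
        linear_combination (j.choose i : ℝ) * h2
      rw [setIntegral_congr_fun measurableSet_Ioi h1]
      rw [integral_finset_sum _ (fun i hi => (hint j hj i (j-i)).const_mul _)]
      exact Finset.sum_congr rfl fun i hi => integral_const_mul _ _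
    rw [negPair, negPair]
    calc ∑ i ∈ Finset.range (k+1), (-1:ℝ)^i * ∫ x in Ioi (0:ℝ), G i x * iteratedDeriv i ϑ x
        = ∑ i ∈ Finset.range (k+1), ∑ r ∈ Finset.range (k+1-i),
            (-1:ℝ)^(i+r) * ((i+r).choose i : ℝ) *
              ∫ x in Ioi (0:ℝ), Φ r i x * (F (i+r) x * a x) := by
          refine Finset.sum_congr rfl fun i hi => ?_
          rw [hGint i (Nat.lt_succ_iff.mp (Finset.mem_range.mp hi)), Finset.mul_sum]
          refine Finset.sum_congr rfl fun r hr => ?_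
          rw [pow_add]
          ring
    _ = ∑ j ∈ Finset.range (k+1), ∑ i ∈ Finset.range (j+1),
            (-1:ℝ)^(i+(j-i)) * ((i+(j-i)).choose i : ℝ) *
              ∫ x in Ioi (0:ℝ), Φ (j-i) i x * (F (i+(j-i)) x * a x) :=
          double_sum_swap (fun i r => (-1:ℝ)^(i+r) * ((i+r).choose i : ℝ) *
            ∫ x in Ioi (0:ℝ), Φ r i x * (F (i+r) x * a x)) k
    _ = ∑ j ∈ Finset.range (k+1), (-1:ℝ)^j *
            ∫ x in Ioi (0:ℝ), F j x * iteratedDeriv j (fun y => w y * ϑ y) x := by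
          refine Finset.sum_congr rfl fun j hj => ?_
          have hjk : j ≤ k := Nat.lt_succ_iff.mp (Finset.mem_range.mp hj)
          rw [hFint j hjk, Finset.mul_sum]
          rw [← Finset.sum_range_reflect (fun i => (-1:ℝ)^j * ((j.choose i : ℝ) *
            ∫ x in Ioi (0:ℝ), Φ i (j-i) x * (F j x * a x))) (j+1)]
          refine Finset.sum_congr rfl fun i hi => ?_
          have hij : i ≤ j := Nat.lt_succ_iff.mp (Finset.mem_range.mp hi)
          have e0 : j + 1 - 1 - i = j - i := by omega
          have e1 : i + (j - i) = j := by omega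
          have e3 : j - (j - i) = i := by omega
          simp only [e0, e1, e3, Nat.choose_symm hij]
          ring
  exact ⟨G, hGbmem, hpair, hnorm⟩

lemma negPair_congr (k : ℕ) (H : ℕ → ℝ → ℝ) {ζ ϑ : ℝ → ℝ}
    (h : Set.EqOn ζ ϑ (Ioi 0)) : negPair k H ζ = negPair k H ϑ := by
  unfold negPair
  refine Finset.sum_congr rfl fun j _ => ?_
  congr 1
  refine setIntegral_congr_fun measurableSet_Ioi fun x hx => ?_
  rw [h.iteratedDeriv_of_isOpen isOpen_Ioi j hx]

/-- Lemma A.4: a distribution `f` on `ℝ₊` belongs to `H^{-k,ψ(x)}(ℝ₊)` iff `f ψ^{1/2}`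
belongs to `H^{-k}(ℝ₊)`, with equivalence of norms.  Stated via representations: from any
representation of `f` in `H^{-k,ψ}` one obtains a representation of `f ψ^{1/2}` in `H^{-k}`
with controlled norm, and conversely. -/
theorem statement10 (ψ : ℝ → ℝ) (hψ : IsAdmissibleWeight ψ) (k : ℕ) :
    ∃ c : ℝ, 0 < c ∧
    (∀ F : ℕ → ℝ → ℝ,
      (∀ j : ℕ, j ≤ k → MemLp (fun x => F j x * Real.sqrt (ψ x)) 2 (volume.restrict (Ioi 0))) →
      ∃ G : ℕ → ℝ → ℝ,
        (∀ j : ℕ, j ≤ k → MemLp (G j) 2 (volume.restrict (Ioi 0))) ∧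
        (∀ ϑ : ℝ → ℝ, ContDiff ℝ (⊤ : ℕ∞) ϑ → HasCompactSupport ϑ → tsupport ϑ ⊆ Ioi 0 →
          negPair k G ϑ = negPair k F (fun x => Real.sqrt (ψ x) * ϑ x)) ∧
        Real.sqrt (∑ j ∈ Finset.range (k + 1), ∫ x in Ioi (0 : ℝ), (G j x) ^ 2) ≤
          c * Real.sqrt (∑ j ∈ Finset.range (k + 1), ∫ x in Ioi (0 : ℝ), (F j x) ^ 2 * ψ x)) ∧
    (∀ G : ℕ → ℝ → ℝ,
      (∀ j : ℕ, j ≤ k → MemLp (G j) 2 (volume.restrict (Ioi 0))) →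
      ∃ F : ℕ → ℝ → ℝ,
        (∀ j : ℕ, j ≤ k → MemLp (fun x => F j x * Real.sqrt (ψ x)) 2 (volume.restrict (Ioi 0))) ∧
        (∀ ϑ : ℝ → ℝ, ContDiff ℝ (⊤ : ℕ∞) ϑ → HasCompactSupport ϑ → tsupport ϑ ⊆ Ioi 0 →
          negPair k G ϑ = negPair k F (fun x => Real.sqrt (ψ x) * ϑ x)) ∧
        Real.sqrt (∑ j ∈ Finset.range (k + 1), ∫ x in Ioi (0 : ℝ), (F j x) ^ 2 * ψ x) ≤
          c * Real.sqrt (∑ j ∈ Finset.range (k + 1), ∫ x in Ioi (0 : ℝ), (G j x) ^ 2)) := by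
  have hψpos : ∀ x ∈ Ioi (0:ℝ), 0 < ψ x := fun x hx => hψ.2.1 x (le_of_lt hx)
  have hsq_pos : ∀ x ∈ Ioi (0:ℝ), 0 < Real.sqrt (ψ x) := fun x hx =>
    Real.sqrt_pos.mpr (hψpos x hx)
  have hsq_cont : ContinuousOn (fun x => Real.sqrt (ψ x)) (Ioi 0) :=
    (sqrtPsi_contDiffOn hψ).continuousOn
  -- forward instance
  obtain ⟨c₁, hc₁, h₁⟩ := main_rep k (fun x => Real.sqrt (ψ x)) (fun x => Real.sqrt (ψ x))
    (fun _ => (1:ℝ)) (sqrtPsi_contDiffOn hψ) hsq_pos hsq_cont continuousOn_const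
    (fun _ _ => zero_le_one)
    (by
      intro m
      obtain ⟨C, hC0, hC⟩ := sqrtPsi_bound hψ m
      exact ⟨C, hC0, fun x hx => by rw [mul_one]; exact hC x hx⟩)
  -- backward instance
  obtain ⟨c₂, hc₂, h₂⟩ := main_rep k (fun x => (Real.sqrt (ψ x))⁻¹) (fun _ => (1:ℝ))
    (fun x => Real.sqrt (ψ x)) (invSqrtPsi_contDiffOn hψ)
    (fun _ _ => zero_lt_one) continuousOn_const hsq_cont
    (fun x hx => Real.sqrt_nonneg _)
    (by
      intro m
      obtain ⟨C, hC0, hC⟩ := invSqrtPsi_bound hψ m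
      refine ⟨C, hC0, fun x hx => ?_⟩
      have h := mul_le_mul_of_nonneg_right (hC x hx) (Real.sqrt_nonneg (ψ x))
      have hne : Real.sqrt (ψ x) ≠ 0 := ne_of_gt (hsq_pos x hx)
      calc |iteratedDeriv m (fun y => (Real.sqrt (ψ y))⁻¹) x| * Real.sqrt (ψ x)
          ≤ C * (Real.sqrt (ψ x))⁻¹ * Real.sqrt (ψ x) := h
      _ = C * 1 := by field_simp)
  have hwcong : ∀ (H : ℕ → ℝ → ℝ) (j : ℕ),
      ∫ x in Ioi (0:ℝ), (H j x * Real.sqrt (ψ x)) ^ 2 =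
        ∫ x in Ioi (0:ℝ), (H j x) ^ 2 * ψ x := by
    intro H j
    refine setIntegral_congr_fun measurableSet_Ioi fun x hx => ?_
    rw [mul_pow, Real.sq_sqrt (le_of_lt (hψpos x hx))]
  refine ⟨max c₁ c₂, lt_max_of_lt_left hc₁, ?_, ?_⟩
  · -- forward direction
    intro F hF
    obtain ⟨G, hGmem, hGpair, hGnorm⟩ := h₁ F hF
    refine ⟨G, ?_, hGpair, ?_⟩
    · intro j hj
      have h := hGmem j hj
      have he : (fun x => G j x * (1:ℝ)) = G j := funext fun x => mul_one _
      rwa [he] at h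
    · have he1 : ∀ j, ∫ x in Ioi (0:ℝ), (G j x * 1) ^ 2 = ∫ x in Ioi (0:ℝ), (G j x) ^ 2 := by
        intro j
        congr 1
        funext x
        rw [mul_one]
      calc Real.sqrt (∑ j ∈ Finset.range (k + 1), ∫ x in Ioi (0 : ℝ), (G j x) ^ 2)
          = Real.sqrt (∑ j ∈ Finset.range (k + 1), ∫ x in Ioi (0 : ℝ), (G j x * 1) ^ 2) := by
            rw [Finset.sum_congr rfl fun j _ => (he1 j).symm]
      _ ≤ c₁ * Real.sqrt (∑ j ∈ Finset.range (k + 1),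
            ∫ x in Ioi (0 : ℝ), (F j x * Real.sqrt (ψ x)) ^ 2) := hGnorm
      _ = c₁ * Real.sqrt (∑ j ∈ Finset.range (k + 1),
            ∫ x in Ioi (0 : ℝ), (F j x) ^ 2 * ψ x) := by
            rw [Finset.sum_congr rfl fun j _ => hwcong F j]
      _ ≤ max c₁ c₂ * Real.sqrt (∑ j ∈ Finset.range (k + 1),
            ∫ x in Ioi (0 : ℝ), (F j x) ^ 2 * ψ x) :=
            mul_le_mul_of_nonneg_right (le_max_left _ _) (Real.sqrt_nonneg _)
  · -- backward direction
    intro G hG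
    have hG' : ∀ j : ℕ, j ≤ k → MemLp (fun x => G j x * (1:ℝ)) 2 (volume.restrict (Ioi 0)) := by
      intro j hj
      have he : (fun x => G j x * (1:ℝ)) = G j := funext fun x => mul_one _
      rw [he]
      exact hG j hj
    obtain ⟨F, hFmem, hFpair, hFnorm⟩ := h₂ G hG'
    refine ⟨F, hFmem, ?_, ?_⟩
    · intro ϑ hϑ hϑc hϑs
      set η : ℝ → ℝ := fun x => Real.sqrt (ψ x) * ϑ x with hη
      have hηsupp : Function.support η ⊆ Function.support ϑ := by
        intro x hx
        simp only [hη, Function.mem_support] at hx ⊢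
        intro h0
        exact hx (by rw [h0, mul_zero])
      have hηc : HasCompactSupport η := hϑc.mono hηsupp
      have hηs : tsupport η ⊆ Ioi 0 := (closure_mono hηsupp).trans hϑs
      have hηsm : ContDiff ℝ (⊤ : ℕ∞) η := by
        rw [contDiff_iff_contDiffAt]
        intro x
        by_cases hx : x ∈ Ioi (0:ℝ)
        · have h1 : ContDiffAt ℝ (⊤ : ℕ∞) ψ x := hψ.1.contDiffAt (Ici_mem_nhds hx)
          exact (h1.sqrt (ne_of_gt (hψpos x hx))).mul hϑ.contDiffAt
        · have hx' : x ∈ (tsupport ϑ)ᶜ := fun h => hx (hϑs h)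
          have hev : η =ᶠ[nhds x] (fun _ => (0:ℝ)) := by
            filter_upwards [(isClosed_tsupport ϑ).isOpen_compl.mem_nhds hx'] with y hy
            simp [hη, image_eq_zero_of_notMem_tsupport hy]
          exact contDiffAt_const.congr_of_eventuallyEq hev
      have hmain := hFpair η hηsm hηc hηs
      have hzeta : Set.EqOn (fun x => (Real.sqrt (ψ x))⁻¹ * η x) ϑ (Ioi 0) := by
        intro x hx
        simp only [hη]
        rw [inv_mul_cancel_left₀ (ne_of_gt (hsq_pos x hx))]
      calc negPair k G ϑ = negPair k G (fun x => (Real.sqrt (ψ x))⁻¹ * η x) :=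
            (negPair_congr k G hzeta).symm
      _ = negPair k F η := hmain.symm
    · have he1 : ∀ j, ∫ x in Ioi (0:ℝ), (G j x * 1) ^ 2 = ∫ x in Ioi (0:ℝ), (G j x) ^ 2 := by
        intro j
        congr 1
        funext x
        rw [mul_one]
      calc Real.sqrt (∑ j ∈ Finset.range (k + 1), ∫ x in Ioi (0 : ℝ), (F j x) ^ 2 * ψ x)
          = Real.sqrt (∑ j ∈ Finset.range (k + 1),
              ∫ x in Ioi (0 : ℝ), (F j x * Real.sqrt (ψ x)) ^ 2) := by
            rw [Finset.sum_congr rfl fun j _ => (hwcong F j)]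
      _ ≤ c₂ * Real.sqrt (∑ j ∈ Finset.range (k + 1),
            ∫ x in Ioi (0 : ℝ), (G j x * 1) ^ 2) := hFnorm
      _ = c₂ * Real.sqrt (∑ j ∈ Finset.range (k + 1),
            ∫ x in Ioi (0 : ℝ), (G j x) ^ 2) := by
            rw [Finset.sum_congr rfl fun j _ => he1 j]
      _ ≤ max c₁ c₂ * Real.sqrt (∑ j ∈ Finset.range (k + 1),
            ∫ x in Ioi (0 : ℝ), (G j x) ^ 2) :=
            mul_le_mul_of_nonneg_right (le_max_right _ _) (Real.sqrt_nonneg _)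

end
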